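/- Let ζ_p = e^{2πi/p} be a primitive p-th root of unity. The assignment σ(X_1) = ζ_p X_1, σ(g_i) = g_i for 1 ≤ i ≤ n−1, σ(t_j) = t_j for 1 ≤ j ≤ n extends to an algebra automorphism σ of Ŷ_{r,n}(q) of order p, so that {1, σ,…,σ^{p−1}} ≅ ℤ/pℤ acts on Ŷ_{r,n}(q); moreover the fixed-point subalgebra of this ℤ/pℤ-action is exactly Ŷ^p_{r,n}(q). -/

import Mathlib

open scoped BigOperators

namespace AYHpaper

/-! ### The affine Yokonuma–Hecke algebra by generators and relations -/

inductive Gen (n : ℕ) : Type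
  | t : Fin n → Gen n
  | g : Fin (n - 1) → Gen n
  | X : Gen n
  | Xinv : Gen n

abbrev FA (n : ℕ) : Type := FreeAlgebra ℂ (Gen n)

noncomputable def ft {n : ℕ} (j : Fin n) : FA n := FreeAlgebra.ι ℂ (Gen.t j)
noncomputable def fg {n : ℕ} (i : Fin (n - 1)) : FA n := FreeAlgebra.ι ℂ (Gen.g i)
noncomputable def fX {n : ℕ} : FA n := FreeAlgebra.ι ℂ Gen.X
noncomputable def fXinv {n : ℕ} : FA n := FreeAlgebra.ι ℂ Gen.Xinv

/-- The simple transposition `s_i` (0-based) acting on indices. -/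
def sAct {n : ℕ} (i : Fin (n - 1)) (j : Fin n) : Fin n :=
  if j.1 = i.1 then ⟨i.1 + 1, by have := i.2; omega⟩
  else if j.1 = i.1 + 1 then ⟨i.1, by have := i.2; omega⟩
  else j

def loFin {n : ℕ} (i : Fin (n - 1)) : Fin n := ⟨i.1, by have := i.2; omega⟩
def hiFin {n : ℕ} (i : Fin (n - 1)) : Fin n := ⟨i.1 + 1, by have := i.2; omega⟩

/-- The element `e_i = (1/r) ∑_{s=0}^{r-1} t_i^s t_{i+1}^{-s}` (in the free algebra,
with `t^{-s}` written `t^{(r-s) % r}`, using `t^r = 1` in the quotient). -/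
noncomputable def fe (r : ℕ) {n : ℕ} (i : Fin (n - 1)) : FA n :=
  (r : ℂ)⁻¹ • ∑ s ∈ Finset.range r, ft (loFin i) ^ s * ft (hiFin i) ^ ((r - s) % r)

/-- The defining relations of the affine Yokonuma–Hecke algebra `Ŷ_{r,n}(q)`. -/
inductive Rel (r n : ℕ) (q : ℂ) : FA n → FA n → Prop
  | gg {i j : Fin (n - 1)} (h : i.1 + 2 ≤ j.1 ∨ j.1 + 2 ≤ i.1) :
      Rel r n q (fg i * fg j) (fg j * fg i)
  | braid {i j : Fin (n - 1)} (h : j.1 = i.1 + 1) :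
      Rel r n q (fg i * fg j * fg i) (fg j * fg i * fg j)
  | tt (i j : Fin n) : Rel r n q (ft i * ft j) (ft j * ft i)
  | gt (i : Fin (n - 1)) (j : Fin n) : Rel r n q (fg i * ft j) (ft (sAct i j) * fg i)
  | tpow (i : Fin n) : Rel r n q (ft i ^ r) 1
  | gsq (i : Fin (n - 1)) :
      Rel r n q (fg i ^ 2) (1 + (q - q⁻¹) • (fe r i * fg i))
  | XXinv : Rel r n q (fX * fXinv) 1
  | XinvX : Rel r n q (fXinv * fX) 1
  | gXgX (i : Fin (n - 1)) (h : i.1 = 0) :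
      Rel r n q (fg i * fX * fg i * fX) (fX * fg i * fX * fg i)
  | gX (i : Fin (n - 1)) (h : 1 ≤ i.1) : Rel r n q (fg i * fX) (fX * fg i)
  | tX (j : Fin n) : Rel r n q (ft j * fX) (fX * ft j)

/-- The affine Yokonuma–Hecke algebra `Ŷ_{r,n}(q)` over `ℂ`. -/
abbrev AYH (r n : ℕ) (q : ℂ) : Type := RingQuot (Rel r n q)

noncomputable def ayhπ (r n : ℕ) (q : ℂ) : FA n →ₐ[ℂ] AYH r n q :=
  RingQuot.mkAlgHom ℂ (Rel r n q)

noncomputable def tEl (r n : ℕ) (q : ℂ) (j : Fin n) : AYH r n q := ayhπ r n q (ft j)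
noncomputable def gEl (r n : ℕ) (q : ℂ) (i : Fin (n - 1)) : AYH r n q := ayhπ r n q (fg i)
noncomputable def X1El (r n : ℕ) (q : ℂ) : AYH r n q := ayhπ r n q fX
noncomputable def X1invEl (r n : ℕ) (q : ℂ) : AYH r n q := ayhπ r n q fXinv
noncomputable def eEl (r n : ℕ) (q : ℂ) (i : Fin (n - 1)) : AYH r n q := ayhπ r n q (fe r i)

/-- `g_i⁻¹ = g_i - (q - q⁻¹) e_i`. -/
noncomputable def gInvEl (r n : ℕ) (q : ℂ) (i : Fin (n - 1)) : AYH r n q :=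
  gEl r n q i - (q - q⁻¹) • eEl r n q i

/-- `X_1, X_2, …` defined by `X_{i+1} = g_i X_i g_i` (0-based recursion). -/
noncomputable def Xseq (r n : ℕ) (q : ℂ) : ℕ → AYH r n q
  | 0 => X1El r n q
  | (k + 1) =>
      if h : k < n - 1 then gEl r n q ⟨k, h⟩ * Xseq r n q k * gEl r n q ⟨k, h⟩
      else Xseq r n q k

noncomputable def XEl (r n : ℕ) (q : ℂ) (j : Fin n) : AYH r n q := Xseq r n q j.1

noncomputable def XinvSeq (r n : ℕ) (q : ℂ) : ℕ → AYH r n q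
  | 0 => X1invEl r n q
  | (k + 1) =>
      if h : k < n - 1 then gInvEl r n q ⟨k, h⟩ * XinvSeq r n q k * gInvEl r n q ⟨k, h⟩
      else XinvSeq r n q k

noncomputable def XinvEl (r n : ℕ) (q : ℂ) (j : Fin n) : AYH r n q := XinvSeq r n q j.1

/-- The fixed primitive `r`-th root of unity `ζ = e^{2πi/r}`; `ζ_k = ζ^{k-1}`. -/
noncomputable def ζr (r : ℕ) : ℂ := Complex.exp (2 * Real.pi * Complex.I / r)

/-! ### Representations -/

/-- A representation of an algebra `A` on `M` is simple (irreducible). -/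
def SimpleRep {A M : Type} [Semiring A] [AddCommGroup M] [Module ℂ M] [Algebra ℂ A]
    (ρ : A →ₐ[ℂ] Module.End ℂ M) : Prop :=
  (∃ v : M, v ≠ 0) ∧
    ∀ W : Submodule ℂ M, (∀ a : A, ∀ w ∈ W, ρ a w ∈ W) → W = ⊥ ∨ W = ⊤

/-- A representation of `Ŷ_{r,n}(q)` is calibrated if it admits a basis of simultaneous
eigenvectors for all the `X_i` (with nonzero eigenvalues) and all the `t_i`
(with eigenvalues among `ζ_1, …, ζ_r`). -/
def CalibratedRep {M : Type} [AddCommGroup M] [Module ℂ M] (r n : ℕ) (q : ℂ)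
    (ρ : AYH r n q →ₐ[ℂ] Module.End ℂ M) : Prop :=
  ∃ (ι : Type) (b : Module.Basis ι ℂ M), ∀ idx : ι,
    (∀ j : Fin n, ∃ ν : ℂ, ν ≠ 0 ∧ ρ (XEl r n q j) (b idx) = ν • b idx) ∧
    (∀ j : Fin n, ∃ k : Fin r, ρ (tEl r n q j) (b idx) = (ζr r) ^ (k : ℕ) • b idx)

/-! ### `r`-skew shapes, boxes and their numbering -/

structure PreShape (r : ℕ) : Type where
  outer : Fin r → YoungDiagram
  inner : Fin r → YoungDiagram
  le : ∀ h, (inner h).cells ⊆ (outer h).cells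

def PreShape.boxes {r : ℕ} (S : PreShape r) : Finset (Fin r × ℕ × ℕ) :=
  Finset.univ.biUnion fun h => ((S.outer h).cells \ (S.inner h).cells).image fun c => (h, c)

/-- An `r`-skew shape with `n` boxes. -/
def SkewShape (r n : ℕ) : Type := {S : PreShape r // S.boxes.card = n}

/-- The boxes of an `r`-skew shape. -/
abbrev Box {r n : ℕ} (S : SkewShape r n) : Type := ↥S.1.boxes

def comp {r n : ℕ} {S : SkewShape r n} (b : Box S) : Fin r := b.1.1
def row {r n : ℕ} {S : SkewShape r n} (b : Box S) : ℕ := b.1.2.1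
def col {r n : ℕ} {S : SkewShape r n} (b : Box S) : ℕ := b.1.2.2
def diag {r n : ℕ} {S : SkewShape r n} (b : Box S) : ℤ := (col b : ℤ) - (row b : ℤ)

/-- The key ordering boxes along major diagonals from southwest to northeast,
component by component. -/
def keyB {r n : ℕ} {S : SkewShape r n} (b : Box S) : Lex (Fin r × Lex (ℤ × ℕ)) :=
  toLex (comp b, toLex (diag b, col b))

theorem keyB_inj {r n : ℕ} {S : SkewShape r n} :
    Function.Injective (keyB (S := S)) := by
  rintro ⟨⟨h₁, i₁, j₁⟩, m₁⟩ ⟨⟨h₂, i₂, j₂⟩, m₂⟩ e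
  have e' : (h₁, ((j₁ : ℤ) - (i₁ : ℤ), j₁)) = (h₂, ((j₂ : ℤ) - (i₂ : ℤ), j₂)) := by
    exact e
  obtain ⟨e1, e2⟩ := Prod.mk.injEq .. ▸ e'
  obtain ⟨e3, e4⟩ := Prod.mk.injEq .. ▸ e2
  apply Subtype.ext
  have : i₁ = i₂ := by omega
  simp_all

noncomputable def boxOrder {r n : ℕ} (S : SkewShape r n) : LinearOrder (Box S) :=
  LinearOrder.lift' keyB keyB_inj

/-- The enumeration `box_1, …, box_n` of the boxes (0-based: `box k` for `k : Fin n`). -/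
noncomputable def boxEnum {r n : ℕ} (S : SkewShape r n) : Fin n ≃ Box S :=
  letI := boxOrder S
  (monoEquivOfFin (Box S) (by rw [Fintype.card_coe]; exact S.2)).toEquiv

/-- The index of a box in the enumeration. -/
noncomputable def boxIdx {r n : ℕ} {S : SkewShape r n} (b : Box S) : Fin n :=
  (boxEnum S).symm b

/-! ### Placed skew shapes -/

/-- A placed `r`-skew shape `(c, λ/μ)`. -/
structure Placed (r n : ℕ) (q : ℂ) : Type where
  shape : SkewShape r n
  c : Box shape → ℂ
  strip : ∀ b, 0 ≤ (c b).im ∧ (c b).im < 2 * Real.pi / Real.log (‖q‖ ^ 2)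
  mono : ∀ b b' : Box shape, boxIdx b < boxIdx b' → ∀ m : ℤ, c b' - c b = (m : ℂ) → 0 ≤ m
  adj_iff : ∀ b b' : Box shape, comp b = comp b' →
      (c b' = c b + 1 ↔ diag b' = diag b + 1)
  same_iff : ∀ b b' : Box shape, comp b = comp b' → (c b' = c b ↔ diag b' = diag b)

/-! ### Standard tableaux -/

/-- A filling (bijective labelling) of the boxes by `1, …, n` is standard if entries
increase from left to right along rows and from top to bottom down columns. -/
def IsStd {r n : ℕ} {S : SkewShape r n} (e : Box S ≃ Fin n) : Prop :=
  (∀ b b' : Box S, comp b = comp b' → row b' = row b → col b' = col b + 1 → e b < e b') ∧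
  (∀ b b' : Box S, comp b = comp b' → col b' = col b → row b' = row b + 1 → e b < e b')

/-- The set of standard tableaux of shape `λ/μ`. -/
def Tab {r n : ℕ} (S : SkewShape r n) : Type := {e : Box S ≃ Fin n // IsStd e}

/-- The underlying vector space of `Ŷ^{(c,λ/μ)}`, with basis `{w_T}` indexed by
standard tableaux. -/
abbrev VS {r n : ℕ} (S : SkewShape r n) : Type := Tab S →₀ ℂ

noncomputable def wT {r n : ℕ} {S : SkewShape r n} (T : Tab S) : VS S :=
  Finsupp.single T 1

/-- `w_{s_i T}`: the basis vector of the tableau obtained from `T` by exchanging the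
entries `i` and `i+1`, or `0` if that filling is not standard. -/
noncomputable def wSwap {r n : ℕ} {S : SkewShape r n} (T : Tab S) (i : Fin (n - 1)) :
    VS S := by
  classical
  exact if h : IsStd (T.1.trans (Equiv.swap (loFin i) (hiFin i)))
    then Finsupp.single ⟨T.1.trans (Equiv.swap (loFin i) (hiFin i)), h⟩ 1 else 0

/-- `q^{2z} = e^{2 z log q}`. -/
noncomputable def qc (q z : ℂ) : ℂ := Complex.exp (2 * z * Complex.log q)

/-- The coefficient `q^{2c(T|i+1)}(q - q⁻¹) / (q^{2c(T|i+1)} - q^{2c(T|i)})`. -/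
noncomputable def gCoeff1 {r n : ℕ} {q : ℂ} (P : Placed r n q) (T : Tab P.shape)
    (i : Fin (n - 1)) : ℂ :=
  qc q (P.c (T.1.symm (hiFin i))) * (q - q⁻¹) /
    (qc q (P.c (T.1.symm (hiFin i))) - qc q (P.c (T.1.symm (loFin i))))

/-- The coefficient `(q^{2c(T|i+1)+1} - q^{2c(T|i)-1}) / (q^{2c(T|i+1)} - q^{2c(T|i)})`. -/
noncomputable def gCoeff2 {r n : ℕ} {q : ℂ} (P : Placed r n q) (T : Tab P.shape)
    (i : Fin (n - 1)) : ℂ :=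
  (q * qc q (P.c (T.1.symm (hiFin i))) - q⁻¹ * qc q (P.c (T.1.symm (loFin i)))) /
    (qc q (P.c (T.1.symm (hiFin i))) - qc q (P.c (T.1.symm (loFin i))))

/-- The defining formulas of the calibrated module `Ŷ^{(c,λ/μ)}` for a representation
`ρ` of `Ŷ_{r,n}(q)` on the span of the `w_T`. -/
structure IsYModel {r n : ℕ} {q : ℂ} (P : Placed r n q)
    (ρ : AYH r n q →ₐ[ℂ] Module.End ℂ (VS P.shape)) : Prop where
  ht : ∀ (T : Tab P.shape) (j : Fin n),
      ρ (tEl r n q j) (wT T) = (ζr r) ^ ((comp (T.1.symm j) : ℕ)) • wT T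
  hX : ∀ (T : Tab P.shape) (j : Fin n),
      ρ (XEl r n q j) (wT T) = qc q (P.c (T.1.symm j)) • wT T
  hg_ne : ∀ (T : Tab P.shape) (i : Fin (n - 1)),
      comp (T.1.symm (loFin i)) ≠ comp (T.1.symm (hiFin i)) →
      ρ (gEl r n q i) (wT T) = wSwap T i
  hg_eq : ∀ (T : Tab P.shape) (i : Fin (n - 1)),
      comp (T.1.symm (loFin i)) = comp (T.1.symm (hiFin i)) →
      ρ (gEl r n q i) (wT T) = gCoeff1 P T i • wT T + gCoeff2 P T i • wSwap T i

end AYHpaper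

namespace AYHpaper

variable (r n : ℕ) (q : ℂ)

/-- `X_j^m` for `m : ℤ` in `Ŷ_{r,n}(q)`. -/
noncomputable def XAzpow (j : Fin n) (m : ℤ) : AYH r n q :=
  if 0 ≤ m then XEl r n q j ^ m.toNat else XinvEl r n q j ^ (-m).toNat

/-- The monomial `X^λ = X_1^{λ_1}⋯X_n^{λ_n}` for `λ ∈ L = ⊕ ℤε_i`. -/
noncomputable def Xlam (lam : Fin n → ℤ) : AYH r n q :=
  (List.ofFn fun j : Fin n => XAzpow r n q j (lam j)).prod

/-- The sublattice `L_p = Q + ∑ pℤε_i` (where `Q = ∑_{i≥2} ℤ(ε_i - ε_{i-1})`)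
consists exactly of the `λ ∈ ℤ^n` with `p ∣ ∑ λ_i`. -/
def memLp (p : ℕ) (lam : Fin n → ℤ) : Prop := (p : ℤ) ∣ ∑ i, lam i

/-- The subalgebra `Ŷ^p_{r,n}(q)` of `Ŷ_{r,n}(q)`: it is spanned by the elements
`t_1^{a_1}⋯t_n^{a_n} X^λ g_w` with `λ ∈ L_p`, i.e. generated by the `X^λ` with
`λ ∈ L_p`, the `g_i` and the `t_j`. -/
noncomputable def YpSub (p : ℕ) : Subalgebra ℂ (AYH r n q) :=
  Algebra.adjoin ℂ
    ({x | ∃ lam : Fin n → ℤ, memLp n p lam ∧ x = Xlam r n q lam} ∪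
      {x | ∃ i, x = gEl r n q i} ∪ {x | ∃ j, x = tEl r n q j})

/-- `ζ_p = e^{2πi/p}`. -/
noncomputable def ζp (p : ℕ) : ℂ := Complex.exp (2 * Real.pi * Complex.I / p)

end AYHpaper

namespace AYHpaper

section Dev
variable (r n : ℕ) (q : ℂ)

theorem qrel {a b : FA n} (h : Rel r n q a b) : ayhπ r n q a = ayhπ r n q b :=
  RingQuot.mkAlgHom_rel ℂ h

theorem eEl_eq (i : Fin (n-1)) : eEl r n q i =
    (r : ℂ)⁻¹ • ∑ s ∈ Finset.range r,
      tEl r n q (loFin i) ^ s * tEl r n q (hiFin i) ^ ((r - s) % r) := by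
  simp [eEl, fe, tEl, map_smul, map_sum]

theorem q_tt (i j : Fin n) : tEl r n q i * tEl r n q j = tEl r n q j * tEl r n q i := by
  simpa [tEl, map_mul] using qrel r n q (Rel.tt i j)

theorem q_gt (i : Fin (n-1)) (j : Fin n) :
    gEl r n q i * tEl r n q j = tEl r n q (sAct i j) * gEl r n q i := by
  simpa [tEl, gEl, map_mul] using qrel r n q (Rel.gt i j)

theorem q_tpow (i : Fin n) : tEl r n q i ^ r = 1 := by
  simpa [tEl, map_pow] using qrel r n q (Rel.tpow i)

theorem q_gsq (i : Fin (n-1)) :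
    gEl r n q i ^ 2 = 1 + (q - q⁻¹) • (eEl r n q i * gEl r n q i) := by
  simpa [gEl, eEl, map_pow, map_mul, map_add, map_smul] using qrel r n q (Rel.gsq i)

theorem q_XXinv : X1El r n q * X1invEl r n q = 1 := by
  simpa [X1El, X1invEl, map_mul] using qrel r n q Rel.XXinv

theorem q_XinvX : X1invEl r n q * X1El r n q = 1 := by
  simpa [X1El, X1invEl, map_mul] using qrel r n q Rel.XinvX

theorem q_gXgX (i : Fin (n-1)) (h : i.1 = 0) :
    gEl r n q i * X1El r n q * gEl r n q i * X1El r n q =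
      X1El r n q * gEl r n q i * X1El r n q * gEl r n q i := by
  simpa [X1El, gEl, map_mul] using qrel r n q (Rel.gXgX i h)

theorem q_gX (i : Fin (n-1)) (h : 1 ≤ i.1) :
    gEl r n q i * X1El r n q = X1El r n q * gEl r n q i := by
  simpa [X1El, gEl, map_mul] using qrel r n q (Rel.gX i h)

theorem q_tX (j : Fin n) :
    tEl r n q j * X1El r n q = X1El r n q * tEl r n q j := by
  simpa [X1El, tEl, map_mul] using qrel r n q (Rel.tX j)

theorem q_gg {i j : Fin (n-1)} (h : i.1 + 2 ≤ j.1 ∨ j.1 + 2 ≤ i.1) :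
    gEl r n q i * gEl r n q j = gEl r n q j * gEl r n q i := by
  simpa [gEl, map_mul] using qrel r n q (Rel.gg h)

end Dev
end AYHpaper
namespace AYHpaper
section Dev2
variable (r n : ℕ) (q : ℂ)

theorem sAct_lo (i : Fin (n-1)) : sAct i (loFin i) = hiFin i := by
  simp [sAct, loFin, hiFin]

theorem sAct_hi (i : Fin (n-1)) : sAct i (hiFin i) = loFin i := by
  simp [sAct, loFin, hiFin]

theorem g_mul_t_pow (i : Fin (n-1)) (j : Fin n) (k : ℕ) :
    gEl r n q i * tEl r n q j ^ k = tEl r n q (sAct i j) ^ k * gEl r n q i := by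
  induction k with
  | zero => simp
  | succ k ih =>
    rw [pow_succ, ← mul_assoc, ih, mul_assoc, q_gt, pow_succ, mul_assoc]

private theorem modf {r s : ℕ} (hs : s < r) : (r - (r - s) % r) % r = s := by
  rcases Nat.eq_zero_or_pos s with rfl | h
  · simp [Nat.mod_self]
  · rw [Nat.mod_eq_of_lt (show r - s < r by omega), show r - (r - s) = s by omega,
      Nat.mod_eq_of_lt hs]

theorem sum_swap_pow {A : Type*} [Ring A] (r : ℕ) (x y : A) (hc : Commute x y) :
    ∑ s ∈ Finset.range r, y ^ s * x ^ ((r - s) % r)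
      = ∑ s ∈ Finset.range r, x ^ s * y ^ ((r - s) % r) := by
  refine Finset.sum_nbij' (fun s => (r - s) % r) (fun s => (r - s) % r) ?_ ?_ ?_ ?_ ?_
  · intro a ha
    simp only [Finset.mem_range] at *
    exact Nat.mod_lt _ (by omega)
  · intro a ha
    simp only [Finset.mem_range] at *
    exact Nat.mod_lt _ (by omega)
  · intro a ha
    simp only [Finset.mem_range] at ha
    exact modf ha
  · intro a ha
    simp only [Finset.mem_range] at ha
    exact modf ha
  · intro a ha
    simp only [Finset.mem_range] at ha
    rw [modf ha]
    exact ((hc.symm.pow_pow _ _).eq)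

theorem g_mul_e (i : Fin (n-1)) :
    gEl r n q i * eEl r n q i = eEl r n q i * gEl r n q i := by
  rw [eEl_eq, mul_smul_comm, smul_mul_assoc, Finset.mul_sum, Finset.sum_mul]
  congr 1
  rw [show (∑ s ∈ Finset.range r, gEl r n q i *
      (tEl r n q (loFin i) ^ s * tEl r n q (hiFin i) ^ ((r - s) % r)))
      = ∑ s ∈ Finset.range r, tEl r n q (hiFin i) ^ s *
        tEl r n q (loFin i) ^ ((r - s) % r) * gEl r n q i from ?_]
  · rw [← Finset.sum_mul, ← Finset.sum_mul]
    congr 1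
    exact sum_swap_pow r _ _ ((q_tt r n q (loFin i) (hiFin i)))
  · refine Finset.sum_congr rfl fun s _ => ?_
    rw [← mul_assoc, g_mul_t_pow, sAct_lo, mul_assoc, g_mul_t_pow, sAct_hi, ← mul_assoc]

theorem g_gsq' (i : Fin (n-1)) :
    gEl r n q i * gEl r n q i = 1 + (q - q⁻¹) • (eEl r n q i * gEl r n q i) := by
  rw [← sq]; exact q_gsq r n q i

theorem g_gInv (i : Fin (n-1)) : gEl r n q i * gInvEl r n q i = 1 := by
  rw [gInvEl, mul_sub, mul_smul_comm, g_mul_e, g_gsq']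
  abel

theorem gInv_g (i : Fin (n-1)) : gInvEl r n q i * gEl r n q i = 1 := by
  rw [gInvEl, sub_mul, smul_mul_assoc, g_gsq']
  abel

theorem Xseq_inv (k : ℕ) :
    Xseq r n q k * XinvSeq r n q k = 1 ∧ XinvSeq r n q k * Xseq r n q k = 1 := by
  induction k with
  | zero => exact ⟨q_XXinv r n q, q_XinvX r n q⟩
  | succ k ih =>
    by_cases h : k < n - 1
    · rw [Xseq, XinvSeq, dif_pos h, dif_pos h]
      constructor
      · calc gEl r n q ⟨k,h⟩ * Xseq r n q k * gEl r n q ⟨k,h⟩ *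
            (gInvEl r n q ⟨k,h⟩ * XinvSeq r n q k * gInvEl r n q ⟨k,h⟩)
            = gEl r n q ⟨k,h⟩ * Xseq r n q k * (gEl r n q ⟨k,h⟩ * gInvEl r n q ⟨k,h⟩) *
              XinvSeq r n q k * gInvEl r n q ⟨k,h⟩ := by noncomm_ring
          _ = 1 := by rw [g_gInv, mul_one, mul_assoc _ (Xseq r n q k), ih.1, mul_one, g_gInv]
      · calc gInvEl r n q ⟨k,h⟩ * XinvSeq r n q k * gInvEl r n q ⟨k,h⟩ *
            (gEl r n q ⟨k,h⟩ * Xseq r n q k * gEl r n q ⟨k,h⟩)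
            = gInvEl r n q ⟨k,h⟩ * XinvSeq r n q k * (gInvEl r n q ⟨k,h⟩ * gEl r n q ⟨k,h⟩) *
              Xseq r n q k * gEl r n q ⟨k,h⟩ := by noncomm_ring
          _ = 1 := by rw [gInv_g, mul_one, mul_assoc _ (XinvSeq r n q k), ih.2, mul_one, gInv_g]
    · rw [Xseq, XinvSeq, dif_neg h, dif_neg h]; exact ih

theorem commute_inv_right {A : Type*} [Monoid A] {x y yi : A}
    (h : Commute x y) (h1 : y * yi = 1) (h2 : yi * y = 1) : Commute x yi := by
  show x * yi = yi * x
  calc x * yi = (yi * y) * (x * yi) := by rw [h2, one_mul]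
    _ = yi * ((y * x) * yi) := by simp [mul_assoc]
    _ = yi * ((x * y) * yi) := by rw [← h.eq]
    _ = (yi * x) * (y * yi) := by simp [mul_assoc]
    _ = yi * x := by rw [h1, mul_one]

theorem X1_comm_t (j : Fin n) : Commute (X1El r n q) (tEl r n q j) :=
  (q_tX r n q j).symm

theorem X1_comm_g (i : Fin (n-1)) (h : 1 ≤ i.1) : Commute (X1El r n q) (gEl r n q i) :=
  (q_gX r n q i h).symm

theorem X1_comm_Xseq (k : ℕ) : Commute (X1El r n q) (Xseq r n q k) := by
  induction k with
  | zero => exact Commute.refl _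
  | succ k ih =>
    by_cases h : k < n - 1
    · rw [Xseq, dif_pos h]
      rcases Nat.eq_zero_or_pos k with rfl | hk
      · show _ = _
        have := (q_gXgX r n q ⟨0, h⟩ rfl).symm
        show X1El r n q * (gEl r n q ⟨0,h⟩ * Xseq r n q 0 * gEl r n q ⟨0,h⟩)
          = gEl r n q ⟨0,h⟩ * Xseq r n q 0 * gEl r n q ⟨0,h⟩ * X1El r n q
        show X1El r n q * (gEl r n q ⟨0,h⟩ * X1El r n q * gEl r n q ⟨0,h⟩)
          = gEl r n q ⟨0,h⟩ * X1El r n q * gEl r n q ⟨0,h⟩ * X1El r n q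
        rw [← this]; noncomm_ring
      · exact ((X1_comm_g r n q ⟨k,h⟩ hk).mul_right ih).mul_right
          (X1_comm_g r n q ⟨k,h⟩ hk)
    · rw [Xseq, dif_neg h]; exact ih

theorem X1_comm_XinvSeq (k : ℕ) : Commute (X1El r n q) (XinvSeq r n q k) :=
  commute_inv_right (X1_comm_Xseq r n q k) (Xseq_inv r n q k).1 (Xseq_inv r n q k).2

theorem X1_comm_e (i : Fin (n-1)) : Commute (X1El r n q) (eEl r n q i) := by
  rw [eEl_eq]
  exact ((Commute.sum_right _ _ _ fun s _ =>
    ((X1_comm_t r n q _).pow_right _).mul_right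
      ((X1_comm_t r n q _).pow_right _))).smul_right _

end Dev2
end AYHpaper
namespace AYHpaper
section Dev3
variable (r n : ℕ) (q : ℂ)

noncomputable def scaleGen (u : ℂ) : Gen n → AYH r n q
  | .t j => tEl r n q j
  | .g i => gEl r n q i
  | .X => u • X1El r n q
  | .Xinv => u⁻¹ • X1invEl r n q

noncomputable def scaleFA (u : ℂ) : FA n →ₐ[ℂ] AYH r n q :=
  FreeAlgebra.lift ℂ (scaleGen r n q u)

@[simp] theorem scaleFA_t (u : ℂ) (j : Fin n) : scaleFA r n q u (ft j) = tEl r n q j := by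
  simp [scaleFA, ft, scaleGen]

@[simp] theorem scaleFA_g (u : ℂ) (i : Fin (n-1)) :
    scaleFA r n q u (fg i) = gEl r n q i := by
  simp [scaleFA, fg, scaleGen]

@[simp] theorem scaleFA_X (u : ℂ) : scaleFA r n q u fX = u • X1El r n q := by
  simp [scaleFA, fX, scaleGen]

@[simp] theorem scaleFA_Xinv (u : ℂ) : scaleFA r n q u fXinv = u⁻¹ • X1invEl r n q := by
  simp [scaleFA, fXinv, scaleGen]

theorem scaleFA_fe (u : ℂ) (i : Fin (n-1)) :
    scaleFA r n q u (fe r i) = eEl r n q i := by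
  rw [eEl_eq]
  simp [fe, map_smul, map_sum]

theorem scale_rel (u : ℂ) (hu : u ≠ 0) {a b : FA n} (h : Rel r n q a b) :
    scaleFA r n q u a = scaleFA r n q u b := by
  induction h with
  | @gg i j h => simp only [map_mul, scaleFA_g]; exact q_gg r n q h
  | @braid i j h =>
      simp only [map_mul, scaleFA_g]
      simpa [gEl, map_mul] using qrel r n q (Rel.braid h)
  | tt i j => simp only [map_mul, scaleFA_t]; exact q_tt r n q i j
  | gt i j => simp only [map_mul, scaleFA_t, scaleFA_g]; exact q_gt r n q i j
  | tpow i => simp only [map_pow, scaleFA_t, map_one]; exact q_tpow r n q i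
  | gsq i =>
      simp only [map_pow, map_add, map_one, map_smul, map_mul, scaleFA_g, scaleFA_fe]
      exact q_gsq r n q i
  | XXinv =>
      simp only [map_mul, scaleFA_X, scaleFA_Xinv, map_one, smul_mul_smul_comm]
      rw [mul_inv_cancel₀ hu, one_smul, q_XXinv]
  | XinvX =>
      simp only [map_mul, scaleFA_X, scaleFA_Xinv, map_one, smul_mul_smul_comm]
      rw [inv_mul_cancel₀ hu, one_smul, q_XinvX]
  | gXgX i h =>
      simp only [map_mul, scaleFA_X, scaleFA_g, smul_mul_assoc, mul_smul_comm, smul_smul]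
      rw [q_gXgX r n q i h]
  | gX i h =>
      simp only [map_mul, scaleFA_X, scaleFA_g, smul_mul_assoc, mul_smul_comm]
      rw [q_gX r n q i h]
  | tX j =>
      simp only [map_mul, scaleFA_X, scaleFA_t, smul_mul_assoc, mul_smul_comm]
      rw [q_tX r n q j]

noncomputable def scaleHom (u : ℂ) (hu : u ≠ 0) : AYH r n q →ₐ[ℂ] AYH r n q :=
  RingQuot.liftAlgHom ℂ ⟨scaleFA r n q u, fun _ _ h => scale_rel r n q u hu h⟩

@[simp] theorem scaleHom_t (u : ℂ) (hu : u ≠ 0) (j : Fin n) :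
    scaleHom r n q u hu (tEl r n q j) = tEl r n q j := by
  rw [tEl, ayhπ, scaleHom, RingQuot.liftAlgHom_mkAlgHom_apply, scaleFA_t]
  rfl

@[simp] theorem scaleHom_g (u : ℂ) (hu : u ≠ 0) (i : Fin (n-1)) :
    scaleHom r n q u hu (gEl r n q i) = gEl r n q i := by
  rw [gEl, ayhπ, scaleHom, RingQuot.liftAlgHom_mkAlgHom_apply, scaleFA_g]
  rfl

@[simp] theorem scaleHom_X (u : ℂ) (hu : u ≠ 0) :
    scaleHom r n q u hu (X1El r n q) = u • X1El r n q := by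
  rw [X1El, ayhπ, scaleHom, RingQuot.liftAlgHom_mkAlgHom_apply, scaleFA_X]
  rfl

@[simp] theorem scaleHom_Xinv (u : ℂ) (hu : u ≠ 0) :
    scaleHom r n q u hu (X1invEl r n q) = u⁻¹ • X1invEl r n q := by
  rw [X1invEl, ayhπ, scaleHom, RingQuot.liftAlgHom_mkAlgHom_apply, scaleFA_Xinv]
  rfl

theorem ayh_hom_ext {B : Type*} [Semiring B] [Algebra ℂ B]
    (f g : AYH r n q →ₐ[ℂ] B)
    (ht : ∀ j, f (tEl r n q j) = g (tEl r n q j))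
    (hg : ∀ i, f (gEl r n q i) = g (gEl r n q i))
    (hX : f (X1El r n q) = g (X1El r n q))
    (hXi : f (X1invEl r n q) = g (X1invEl r n q)) : f = g := by
  apply RingQuot.ringQuot_ext'
  apply FreeAlgebra.hom_ext
  funext v
  cases v with
  | t j => exact ht j
  | g i => exact hg i
  | X => exact hX
  | Xinv => exact hXi

noncomputable def sigmaEquiv (u : ℂ) (hu : u ≠ 0) : AYH r n q ≃ₐ[ℂ] AYH r n q :=
  AlgEquiv.ofAlgHom (scaleHom r n q u hu) (scaleHom r n q u⁻¹ (inv_ne_zero hu))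
    (by
      apply ayh_hom_ext <;>
        simp [map_smul, smul_smul, mul_inv_cancel₀ hu, inv_inv, inv_mul_cancel₀ hu])
    (by
      apply ayh_hom_ext <;>
        simp [map_smul, smul_smul, mul_inv_cancel₀ hu, inv_inv, inv_mul_cancel₀ hu])

@[simp] theorem sigmaEquiv_t (u : ℂ) (hu : u ≠ 0) (j : Fin n) :
    sigmaEquiv r n q u hu (tEl r n q j) = tEl r n q j := scaleHom_t r n q u hu j

@[simp] theorem sigmaEquiv_g (u : ℂ) (hu : u ≠ 0) (i : Fin (n-1)) :
    sigmaEquiv r n q u hu (gEl r n q i) = gEl r n q i := scaleHom_g r n q u hu i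

@[simp] theorem sigmaEquiv_X (u : ℂ) (hu : u ≠ 0) :
    sigmaEquiv r n q u hu (X1El r n q) = u • X1El r n q := scaleHom_X r n q u hu

@[simp] theorem sigmaEquiv_Xinv (u : ℂ) (hu : u ≠ 0) :
    sigmaEquiv r n q u hu (X1invEl r n q) = u⁻¹ • X1invEl r n q := scaleHom_Xinv r n q u hu

end Dev3
end AYHpaper
namespace AYHpaper
section Dev4
variable (r n : ℕ) (q : ℂ)

noncomputable def oneGen : Gen n → ℂ
  | .t _ => 1
  | .g _ => q
  | .X => 1
  | .Xinv => 1

noncomputable def oneFA : FA n →ₐ[ℂ] ℂ := FreeAlgebra.lift ℂ (oneGen n q)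

@[simp] theorem oneFA_t (j : Fin n) : oneFA n q (ft j) = 1 := by simp [oneFA, ft, oneGen]
@[simp] theorem oneFA_g (i : Fin (n-1)) : oneFA n q (fg i) = q := by simp [oneFA, fg, oneGen]
@[simp] theorem oneFA_X : oneFA n q fX = 1 := by simp [oneFA, fX, oneGen]
@[simp] theorem oneFA_Xinv : oneFA n q fXinv = 1 := by simp [oneFA, fXinv, oneGen]

theorem oneFA_fe (hr : 0 < r) (i : Fin (n-1)) : oneFA n q (fe r i) = 1 := by
  simp [fe, map_smul, map_sum, smul_eq_mul]
  rw [inv_mul_cancel₀]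
  exact_mod_cast hr.ne'

theorem one_rel (hr : 0 < r) (hq0 : q ≠ 0) {a b : FA n} (h : Rel r n q a b) :
    oneFA n q a = oneFA n q b := by
  induction h with
  | @gg i j h => simp [mul_comm]
  | @braid i j h => simp
  | tt i j => simp [mul_comm]
  | gt i j => simp
  | tpow i => simp
  | gsq i =>
      simp only [map_pow, map_add, map_one, map_smul, map_mul, oneFA_g, oneFA_fe r n q hr,
        smul_eq_mul, one_mul]
      field_simp
      ring
  | XXinv => simp
  | XinvX => simp
  | gXgX i h => simp
  | gX i h => simp [mul_comm]
  | tX j => simp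

theorem X1El_ne_zero (hr : 0 < r) (hq0 : q ≠ 0) : X1El r n q ≠ 0 := by
  intro h0
  have h1 : (RingQuot.liftAlgHom ℂ ⟨oneFA n q, fun _ _ h => one_rel r n q hr hq0 h⟩)
      (X1El r n q) = 1 := by
    rw [X1El, ayhπ, RingQuot.liftAlgHom_mkAlgHom_apply, oneFA_X]
  rw [h0, map_zero] at h1
  exact zero_ne_one h1

variable (u : ℂ) (hu : u ≠ 0)

theorem Xseq_succ (k : ℕ) : Xseq r n q (k+1) =
    if h : k < n - 1 then gEl r n q ⟨k, h⟩ * Xseq r n q k * gEl r n q ⟨k, h⟩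
    else Xseq r n q k := rfl

theorem XinvSeq_succ (k : ℕ) : XinvSeq r n q (k+1) =
    if h : k < n - 1 then gInvEl r n q ⟨k, h⟩ * XinvSeq r n q k * gInvEl r n q ⟨k, h⟩
    else XinvSeq r n q k := rfl

theorem sigma_Xseq (k : ℕ) :
    sigmaEquiv r n q u hu (Xseq r n q k) = u • Xseq r n q k := by
  induction k with
  | zero => exact sigmaEquiv_X r n q u hu
  | succ k ih =>
    by_cases h : k < n - 1
    · rw [Xseq_succ, dif_pos h, map_mul, map_mul, ih, sigmaEquiv_g, mul_smul_comm,
        smul_mul_assoc]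
    · rw [Xseq_succ, dif_neg h, ih]

theorem sigma_e (i : Fin (n-1)) : sigmaEquiv r n q u hu (eEl r n q i) = eEl r n q i := by
  rw [eEl_eq, map_smul, map_sum]
  simp [map_pow]

theorem sigma_gInv (i : Fin (n-1)) :
    sigmaEquiv r n q u hu (gInvEl r n q i) = gInvEl r n q i := by
  rw [gInvEl, map_sub, map_smul, sigma_e, sigmaEquiv_g]

theorem sigma_XinvSeq (k : ℕ) :
    sigmaEquiv r n q u hu (XinvSeq r n q k) = u⁻¹ • XinvSeq r n q k := by
  induction k with
  | zero => exact sigmaEquiv_Xinv r n q u hu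
  | succ k ih =>
    by_cases h : k < n - 1
    · rw [XinvSeq_succ, dif_pos h, map_mul, map_mul, ih, sigma_gInv, mul_smul_comm,
        smul_mul_assoc]
    · rw [XinvSeq_succ, dif_neg h, ih]

theorem sigma_XAzpow (j : Fin n) (m : ℤ) :
    sigmaEquiv r n q u hu (XAzpow r n q j m) = u ^ m • XAzpow r n q j m := by
  rw [XAzpow]
  split_ifs with h
  · rw [map_pow, XEl, sigma_Xseq, smul_pow, ← zpow_natCast, Int.toNat_of_nonneg h]
  · rw [map_pow, XinvEl, sigma_XinvSeq, smul_pow, inv_pow, ← zpow_natCast,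
      Int.toNat_of_nonneg (by omega), ← zpow_neg, neg_neg]

theorem ofFn_prod_smul {A : Type*} [Ring A] [Algebra ℂ A] {m : ℕ}
    (c : Fin m → ℂ) (f : Fin m → A) :
    (List.ofFn fun j => c j • f j).prod = (∏ j, c j) • (List.ofFn f).prod := by
  induction m with
  | zero => simp
  | succ m ih =>
    rw [List.ofFn_succ, List.ofFn_succ, List.prod_cons, List.prod_cons,
      Fin.prod_univ_succ]
    rw [show (List.ofFn fun i : Fin m => c i.succ • f i.succ).prod
        = (∏ i : Fin m, c i.succ) • (List.ofFn fun i : Fin m => f i.succ).prod from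
      ih _ _]
    rw [mul_smul_comm, smul_mul_assoc, smul_smul, mul_comm]

theorem ofFn_prod_single {M : Type*} [Monoid M] {m : ℕ} (f : Fin m → M) (j0 : Fin m)
    (h : ∀ j, j ≠ j0 → f j = 1) : (List.ofFn f).prod = f j0 := by
  induction m with
  | zero => exact j0.elim0
  | succ m ih =>
    rw [List.ofFn_succ, List.prod_cons]
    rcases Fin.eq_zero_or_eq_succ j0 with rfl | ⟨j1, rfl⟩
    · have hone : (List.ofFn fun i : Fin m => f i.succ).prod = 1 := by
        apply List.prod_eq_one
        intro x hx
        rw [List.mem_ofFn] at hx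
        obtain ⟨j, rfl⟩ := hx
        exact h _ (Fin.succ_ne_zero j)
      rw [hone, mul_one]
    · rw [h 0 (Ne.symm (Fin.succ_ne_zero j1)), one_mul]
      exact ih (fun i => f i.succ) j1 fun j hj =>
        h _ (by simpa [Fin.succ_inj] using hj)

theorem ofFn_prod_pair {M : Type*} [Monoid M] {m : ℕ} (f : Fin (m+2) → M)
    (h : ∀ j : Fin (m+2), 2 ≤ j.1 → f j = 1) : (List.ofFn f).prod = f 0 * f 1 := by
  rw [List.ofFn_succ, List.prod_cons]
  congr 1
  rw [show (List.ofFn fun i : Fin (m+1) => f i.succ).prod = f (Fin.succ 0) from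
    ofFn_prod_single (fun i => f i.succ) 0 fun j hj => h _ (by
      have : j.1 ≠ 0 := fun hz => hj (Fin.ext hz)
      simp only [Fin.val_succ]
      omega)]
  rw [Fin.succ_zero_eq_one']

end Dev4
end AYHpaper
namespace AYHpaper
section Dev5
variable (r n : ℕ) (q : ℂ) (p : ℕ)

theorem t_mem (j : Fin n) : tEl r n q j ∈ YpSub r n q p :=
  Algebra.subset_adjoin (Set.mem_union_right _ ⟨j, rfl⟩)

theorem g_mem (i : Fin (n-1)) : gEl r n q i ∈ YpSub r n q p :=
  Algebra.subset_adjoin (Set.mem_union_left _ (Set.mem_union_right _ ⟨i, rfl⟩))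

theorem Xlam_mem (lam : Fin n → ℤ) (h : memLp n p lam) :
    Xlam r n q lam ∈ YpSub r n q p :=
  Algebra.subset_adjoin (Set.mem_union_left _ (Set.mem_union_left _ ⟨lam, h, rfl⟩))

theorem e_mem (i : Fin (n-1)) : eEl r n q i ∈ YpSub r n q p := by
  rw [eEl_eq]
  exact Subalgebra.smul_mem _ (sum_mem fun s _ =>
    mul_mem (pow_mem (t_mem r n q p _) _) (pow_mem (t_mem r n q p _) _)) _

theorem gInv_mem (i : Fin (n-1)) : gInvEl r n q i ∈ YpSub r n q p := by
  rw [gInvEl]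
  exact sub_mem (g_mem r n q p i) (Subalgebra.smul_mem _ (e_mem r n q p i) _)

theorem prod_zpow₀ {u : ℂ} (hu : u ≠ 0) {ι : Type*} (s : Finset ι) (f : ι → ℤ) :
    ∏ i ∈ s, u ^ f i = u ^ (∑ i ∈ s, f i) := by
  induction s using Finset.cons_induction with
  | empty => simp
  | cons a s ha ih => rw [Finset.prod_cons, Finset.sum_cons, zpow_add₀ hu, ih]

theorem sigma_Xlam (u : ℂ) (hu : u ≠ 0) (lam : Fin n → ℤ) :
    sigmaEquiv r n q u hu (Xlam r n q lam)
      = u ^ (∑ j, lam j) • Xlam r n q lam := by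
  rw [Xlam, map_list_prod, List.map_ofFn]
  rw [show (List.ofFn (⇑(sigmaEquiv r n q u hu) ∘ fun j => XAzpow r n q j (lam j)))
      = List.ofFn fun j => u ^ lam j • XAzpow r n q j (lam j) from by
    congr 1
    funext j
    exact sigma_XAzpow r n q u hu j (lam j)]
  exact (ofFn_prod_smul (fun j => u ^ lam j) (fun j => XAzpow r n q j (lam j))).trans
    (by rw [prod_zpow₀ hu])

theorem sigma_fix_Yp (u : ℂ) (hu : u ≠ 0) (hup : u ^ (p : ℕ) = 1)
    {a : AYH r n q} (ha : a ∈ YpSub r n q p) :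
    sigmaEquiv r n q u hu a = a := by
  induction ha using Algebra.adjoin_induction with
  | mem x hx =>
    rcases hx with (⟨lam, hl, rfl⟩ | ⟨i, rfl⟩) | ⟨j, rfl⟩
    · rw [sigma_Xlam]
      obtain ⟨c, hc⟩ := hl
      rw [hc, zpow_mul, zpow_natCast, hup, one_zpow, one_smul]
    · exact sigmaEquiv_g r n q u hu i
    · exact sigmaEquiv_t r n q u hu j
  | algebraMap c => exact AlgEquiv.commutes _ c
  | add x y hx hy ihx ihy => rw [map_add, ihx, ihy]
  | mul x y hx hy ihx ihy => rw [map_mul, ihx, ihy]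

theorem conj_eq_of_commute {A : Type*} [Monoid A] {x xi a : A}
    (h : Commute a x) (h1 : x * xi = 1) : x * a * xi = a := by
  rw [← h.eq, mul_assoc, h1, mul_one]

theorem X1_comm_XAzpow (j : Fin n) (m : ℤ) :
    Commute (X1El r n q) (XAzpow r n q j m) := by
  rw [XAzpow]
  split_ifs
  · exact (X1_comm_Xseq r n q _).pow_right _
  · exact (X1_comm_XinvSeq r n q _).pow_right _

theorem X1_comm_Xlam (lam : Fin n → ℤ) :
    Commute (X1El r n q) (Xlam r n q lam) := by
  rw [Xlam]
  refine Commute.list_prod_right _ _ fun x hx => ?_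
  rw [List.mem_ofFn] at hx
  obtain ⟨j, rfl⟩ := hx
  exact X1_comm_XAzpow r n q j _

end Dev5
end AYHpaper
namespace AYHpaper
section Dev6
variable (r n : ℕ) (q : ℂ) (p : ℕ)

@[simp] theorem XAzpow_zero (j : Fin n) : XAzpow r n q j 0 = 1 := by
  simp [XAzpow]

def lamPair (n : ℕ) (a b : ℤ) : Fin n → ℤ :=
  fun j => if j.1 = 0 then a else if j.1 = 1 then b else 0

theorem sum_lamPair (hn2 : 1 < n) (a b : ℤ) : ∑ j, lamPair n a b j = a + b := by
  obtain ⟨m, rfl⟩ : ∃ m, n = m + 2 := ⟨n - 2, by omega⟩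
  rw [Fin.sum_univ_succ, Fin.sum_univ_succ]
  simp [lamPair, Fin.val_succ]

theorem Xlam_pair (hn2 : 1 < n) (a b : ℤ) :
    Xlam r n q (lamPair n a b)
      = XAzpow r n q ⟨0, by omega⟩ a * XAzpow r n q ⟨1, by omega⟩ b := by
  obtain ⟨m, rfl⟩ : ∃ m, n = m + 2 := ⟨n - 2, by omega⟩
  rw [Xlam, ofFn_prod_pair _ (fun j hj => by
    rw [show lamPair (m+2) a b j = 0 from by
      rw [lamPair, if_neg (by omega), if_neg (by omega)], XAzpow_zero])]
  rw [show lamPair (m+2) a b 0 = a from by simp [lamPair],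
    show lamPair (m+2) a b 1 = b from by simp [lamPair],
    show (0 : Fin (m+2)) = ⟨0, by omega⟩ from Fin.ext (by simp),
    show (1 : Fin (m+2)) = ⟨1, by omega⟩ from Fin.ext (by simp)]

theorem memLp_lamPair_sub (hn2 : 1 < n) (a : ℤ) :
    memLp n p (lamPair n a (-a)) := by
  rw [memLp, sum_lamPair n hn2]
  simp

section Gzero
variable (i : Fin (n - 1)) (h0 : i.1 = 0)

theorem hn2_of (i : Fin (n-1)) : 1 < n := by have := i.2; omega

theorem Xseq_one (h0 : i.1 = 0) : Xseq r n q 1 = gEl r n q i * X1El r n q * gEl r n q i := by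
  have h : (0:ℕ) < n - 1 := h0 ▸ i.2
  have hi : i = ⟨0, h⟩ := Fin.ext h0
  rw [show (1:ℕ) = 0 + 1 from rfl, Xseq_succ, dif_pos h, hi]
  rfl

theorem XinvSeq_one (h0 : i.1 = 0) :
    XinvSeq r n q 1 = gInvEl r n q i * X1invEl r n q * gInvEl r n q i := by
  have h : (0:ℕ) < n - 1 := h0 ▸ i.2
  have hi : i = ⟨0, h⟩ := Fin.ext h0
  rw [show (1:ℕ) = 0 + 1 from rfl, XinvSeq_succ, dif_pos h, hi]
  rfl

theorem g_eq_gInv_add : gEl r n q i = gInvEl r n q i + (q - q⁻¹) • eEl r n q i := by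
  rw [gInvEl]; abel

theorem g_mul_X1 (h0 : i.1 = 0) : gEl r n q i * X1El r n q = Xseq r n q 1 * gInvEl r n q i := by
  rw [Xseq_one r n q i h0, mul_assoc, g_gInv, mul_one]

theorem g_mul_X1inv (h0 : i.1 = 0) : gEl r n q i * X1invEl r n q
    = XinvSeq r n q 1 * gEl r n q i + (q - q⁻¹) • (eEl r n q i * X1invEl r n q) := by
  rw [XinvSeq_one r n q i h0, mul_assoc _ _ (gEl r n q i), gInv_g, mul_one]
  rw [g_eq_gInv_add r n q i, add_mul, smul_mul_assoc]

theorem Xlam_pair_eval_neg (hn2 : 1 < n) :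
    Xlam r n q (lamPair n (-1) 1) = X1invEl r n q * Xseq r n q 1 := by
  rw [Xlam_pair r n q hn2]
  have h1 : XAzpow r n q ⟨0, by omega⟩ (-1) = X1invEl r n q := by
    rw [XAzpow, if_neg (by norm_num)]
    norm_num [XinvEl]
    rfl
  have h2 : XAzpow r n q ⟨1, by omega⟩ (1:ℤ) = Xseq r n q 1 := by
    rw [XAzpow, if_pos (by norm_num)]
    norm_num [XEl]
  rw [h1, h2]

theorem Xlam_pair_eval_pos (hn2 : 1 < n) :
    Xlam r n q (lamPair n 1 (-1)) = X1El r n q * XinvSeq r n q 1 := by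
  rw [Xlam_pair r n q hn2]
  have h1 : XAzpow r n q ⟨0, by omega⟩ (1:ℤ) = X1El r n q := by
    rw [XAzpow, if_pos (by norm_num)]
    norm_num [XEl]
    rfl
  have h2 : XAzpow r n q ⟨1, by omega⟩ (-1) = XinvSeq r n q 1 := by
    rw [XAzpow, if_neg (by norm_num)]
    norm_num [XinvEl]
  rw [h1, h2]

theorem conj0A (h0 : i.1 = 0) : X1invEl r n q * gEl r n q i * X1El r n q
    = Xlam r n q (lamPair n (-1) 1) * gInvEl r n q i := by
  rw [mul_assoc, g_mul_X1 r n q i h0, Xlam_pair_eval_neg r n q (hn2_of n i), mul_assoc]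

theorem conj0B (h0 : i.1 = 0) : X1El r n q * gEl r n q i * X1invEl r n q
    = Xlam r n q (lamPair n 1 (-1)) * gEl r n q i + (q - q⁻¹) • eEl r n q i := by
  rw [mul_assoc, g_mul_X1inv r n q i h0, mul_add, ← mul_assoc,
    Xlam_pair_eval_pos r n q (hn2_of n i), mul_assoc, mul_smul_comm,
    show X1El r n q * (eEl r n q i * X1invEl r n q) = eEl r n q i from by
      rw [← mul_assoc, (X1_comm_e r n q i).eq, mul_assoc, q_XXinv, mul_one]]

end Gzero

theorem conj_mul {A : Type*} [Monoid A] (x xi a b : A) (h : xi * x = 1) :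
    x * (a * b) * xi = (x * a * xi) * (x * b * xi) := by
  have h2 : x * a * xi * (x * b * xi) = x * a * ((xi * x) * (b * xi)) := by
    simp [mul_assoc]
  rw [h2, h, one_mul]
  simp [mul_assoc]

theorem conj_mem {a : AYH r n q} (ha : a ∈ YpSub r n q p) :
    X1El r n q * a * X1invEl r n q ∈ YpSub r n q p ∧
      X1invEl r n q * a * X1El r n q ∈ YpSub r n q p := by
  induction ha using Algebra.adjoin_induction with
  | mem x hx =>
    rcases hx with (⟨lam, hl, rfl⟩ | ⟨i, rfl⟩) | ⟨j, rfl⟩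
    · have c1 : Commute (Xlam r n q lam) (X1El r n q) := (X1_comm_Xlam r n q lam).symm
      have c2 : Commute (Xlam r n q lam) (X1invEl r n q) :=
        commute_inv_right c1 (q_XXinv r n q) (q_XinvX r n q)
      rw [conj_eq_of_commute c1 (q_XXinv r n q),
        conj_eq_of_commute c2 (q_XinvX r n q)]
      exact ⟨Xlam_mem r n q p lam hl, Xlam_mem r n q p lam hl⟩
    · by_cases hi : i.1 = 0
      · constructor
        · rw [conj0B r n q i hi]
          exact add_mem (mul_mem (Xlam_mem r n q p _
              (memLp_lamPair_sub n p (hn2_of n i) 1)) (g_mem r n q p i))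
            (Subalgebra.smul_mem _ (e_mem r n q p i) _)
        · rw [conj0A r n q i hi]
          refine mul_mem (Xlam_mem r n q p _ ?_) (gInv_mem r n q p i)
          have := memLp_lamPair_sub n p (hn2_of n i) (-1)
          simpa using this
      · have hi1 : 1 ≤ i.1 := by omega
        have c1 : Commute (gEl r n q i) (X1El r n q) := (X1_comm_g r n q i hi1).symm
        have c2 : Commute (gEl r n q i) (X1invEl r n q) :=
          commute_inv_right c1 (q_XXinv r n q) (q_XinvX r n q)
        rw [conj_eq_of_commute c1 (q_XXinv r n q),
          conj_eq_of_commute c2 (q_XinvX r n q)]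
        exact ⟨g_mem r n q p i, g_mem r n q p i⟩
    · have c1 : Commute (tEl r n q j) (X1El r n q) := (X1_comm_t r n q j).symm
      have c2 : Commute (tEl r n q j) (X1invEl r n q) :=
        commute_inv_right c1 (q_XXinv r n q) (q_XinvX r n q)
      rw [conj_eq_of_commute c1 (q_XXinv r n q),
        conj_eq_of_commute c2 (q_XinvX r n q)]
      exact ⟨t_mem r n q p j, t_mem r n q p j⟩
  | algebraMap c =>
    have c1 : Commute ((algebraMap ℂ (AYH r n q)) c) (X1El r n q) :=
      Algebra.commutes c _
    have c2 : Commute ((algebraMap ℂ (AYH r n q)) c) (X1invEl r n q) :=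
      Algebra.commutes c _
    rw [conj_eq_of_commute c1 (q_XXinv r n q),
      conj_eq_of_commute c2 (q_XinvX r n q)]
    exact ⟨Subalgebra.algebraMap_mem _ c, Subalgebra.algebraMap_mem _ c⟩
  | add x y hx hy ihx ihy =>
    constructor
    · rw [mul_add, add_mul]; exact add_mem ihx.1 ihy.1
    · rw [mul_add, add_mul]; exact add_mem ihx.2 ihy.2
  | mul x y hx hy ihx ihy =>
    constructor
    · rw [conj_mul _ _ x y (q_XinvX r n q)]; exact mul_mem ihx.1 ihy.1
    · rw [conj_mul _ _ x y (q_XXinv r n q)]; exact mul_mem ihx.2 ihy.2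

end Dev6
end AYHpaper
namespace AYHpaper
section Dev7
variable (r n : ℕ) (q : ℂ) (p : ℕ) (hn : 0 < n)

noncomputable def P1 (m : ℤ) : AYH r n q := XAzpow r n q ⟨0, hn⟩ m

theorem XEl_zero : XEl r n q ⟨0, hn⟩ = X1El r n q := rfl
theorem XinvEl_zero : XinvEl r n q ⟨0, hn⟩ = X1invEl r n q := rfl

theorem P1_zero : P1 r n q hn 0 = 1 := by simp [P1]

theorem P1_mul_X1 (m : ℤ) : P1 r n q hn m * X1El r n q = P1 r n q hn (m+1) := by
  rw [P1, P1, XAzpow, XAzpow]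
  split_ifs with h1 h2 h2
  · rw [XEl_zero, ← pow_succ, show (m+1).toNat = m.toNat + 1 by omega]
  · omega
  · -- m < 0, 0 ≤ m + 1, so m = -1
    have hm : m = -1 := by omega
    subst hm
    norm_num [XinvEl_zero, XEl_zero, q_XinvX]
  · -- m < 0, m + 1 < 0
    have hk : (-m).toNat = (-(m+1)).toNat + 1 := by omega
    rw [XinvEl_zero, hk, pow_succ, mul_assoc, q_XinvX, mul_one]

theorem P1_mul_X1inv (m : ℤ) :
    P1 r n q hn m * X1invEl r n q = P1 r n q hn (m-1) := by
  rw [P1, P1, XAzpow, XAzpow]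
  split_ifs with h1 h2 h2
  · -- 0 ≤ m, 0 ≤ m - 1 so 1 ≤ m
    have hk : m.toNat = (m-1).toNat + 1 := by omega
    rw [XEl_zero, hk, pow_succ, mul_assoc, q_XXinv, mul_one]
  · -- 0 ≤ m, m - 1 < 0 so m = 0
    have hm : m = 0 := by omega
    subst hm
    norm_num [XEl_zero, XinvEl_zero]
  · omega
  · rw [XinvEl_zero, ← pow_succ, show (-(m-1)).toNat = (-m).toNat + 1 by omega]

theorem P1_eq_Xlam (m : ℤ) :
    P1 r n q hn m = Xlam r n q (fun j => if j.1 = 0 then m else 0) := by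
  rw [Xlam, ofFn_prod_single _ ⟨0, hn⟩ fun j hj => by
    rw [show (if j.1 = 0 then m else 0) = 0 from
      if_neg fun hz => hj (Fin.ext hz), XAzpow_zero]]
  rw [if_pos rfl, P1]

theorem P1_mem (m : ℤ) (hm : (p:ℤ) ∣ m) : P1 r n q hn m ∈ YpSub r n q p := by
  rw [P1_eq_Xlam]
  refine Xlam_mem r n q p _ ?_
  rw [memLp, show (fun j : Fin n => if j.1 = 0 then m else 0)
    = fun j : Fin n => if j = ⟨0, hn⟩ then m else 0 from funext fun j => by
      by_cases hj : j = ⟨0, hn⟩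
      · subst hj; simp
      · rw [if_neg fun hz => hj (Fin.ext hz), if_neg hj]]
  rw [Finset.sum_ite_eq' Finset.univ (⟨0, hn⟩ : Fin n) fun _ => m,
    if_pos (Finset.mem_univ _)]
  exact hm

theorem sigma_P1 (u : ℂ) (hu : u ≠ 0) (m : ℤ) :
    sigmaEquiv r n q u hu (P1 r n q hn m) = u ^ m • P1 r n q hn m :=
  sigma_XAzpow r n q u hu _ m

/-- The spanning submodule. -/
noncomputable def Mspan : Submodule ℂ (AYH r n q) :=
  Submodule.span ℂ
    {x | ∃ (m : ℤ) (y : AYH r n q), y ∈ YpSub r n q p ∧ x = P1 r n q hn m * y}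

theorem mul_gen_mem {x : AYH r n q}
    (hx : x ∈ {x | ∃ (m : ℤ) (y : AYH r n q), y ∈ YpSub r n q p ∧ x = P1 r n q hn m * y})
    (v : Gen n) : x * ayhπ r n q (FreeAlgebra.ι ℂ v) ∈ Mspan r n q p hn := by
  obtain ⟨m, y, hy, rfl⟩ := hx
  cases v with
  | t j =>
    refine Submodule.subset_span ⟨m, y * tEl r n q j,
      mul_mem hy (t_mem r n q p j), ?_⟩
    rw [mul_assoc]; rfl
  | g i =>
    refine Submodule.subset_span ⟨m, y * gEl r n q i,
      mul_mem hy (g_mem r n q p i), ?_⟩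
    rw [mul_assoc]; rfl
  | X =>
    have hy' := (conj_mem r n q p hy).2
    refine Submodule.subset_span ⟨m + 1, X1invEl r n q * y * X1El r n q, hy', ?_⟩
    show P1 r n q hn m * y * X1El r n q = _
    rw [← P1_mul_X1 r n q hn m]
    calc P1 r n q hn m * y * X1El r n q
        = P1 r n q hn m * ((X1El r n q * X1invEl r n q) * (y * X1El r n q)) := by
          rw [q_XXinv, one_mul, mul_assoc]
      _ = P1 r n q hn m * X1El r n q * (X1invEl r n q * y * X1El r n q) := by
          simp [mul_assoc]
  | Xinv =>
    have hy' := (conj_mem r n q p hy).1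
    refine Submodule.subset_span ⟨m - 1, X1El r n q * y * X1invEl r n q, hy', ?_⟩
    show P1 r n q hn m * y * X1invEl r n q = _
    rw [← P1_mul_X1inv r n q hn m]
    calc P1 r n q hn m * y * X1invEl r n q
        = P1 r n q hn m * ((X1invEl r n q * X1El r n q) * (y * X1invEl r n q)) := by
          rw [q_XinvX, one_mul, mul_assoc]
      _ = P1 r n q hn m * X1invEl r n q * (X1El r n q * y * X1invEl r n q) := by
          simp [mul_assoc]

theorem Mspan_mul_gen {x : AYH r n q} (hx : x ∈ Mspan r n q p hn) (v : Gen n) :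
    x * ayhπ r n q (FreeAlgebra.ι ℂ v) ∈ Mspan r n q p hn := by
  induction hx using Submodule.span_induction with
  | mem x hx => exact mul_gen_mem r n q p hn hx v
  | zero => rw [zero_mul]; exact zero_mem _
  | add x y hx hy ihx ihy => rw [add_mul]; exact add_mem ihx ihy
  | smul c x hx ihx => rw [smul_mul_assoc]; exact Submodule.smul_mem _ c ihx

theorem one_mem_Mspan : (1 : AYH r n q) ∈ Mspan r n q p hn :=
  Submodule.subset_span ⟨0, 1, one_mem _, by rw [P1_zero, one_mul]⟩

theorem Mspan_top (a : AYH r n q) : a ∈ Mspan r n q p hn := by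
  obtain ⟨w, rfl⟩ := RingQuot.mkAlgHom_surjective ℂ (Rel r n q) a
  have main : ∀ w : FA n, ∀ x ∈ Mspan r n q p hn,
      x * RingQuot.mkAlgHom ℂ (Rel r n q) w ∈ Mspan r n q p hn := by
    intro w
    induction w using FreeAlgebra.induction with
    | grade0 c =>
      intro x hx
      rw [AlgHom.commutes, ← Algebra.commutes, ← Algebra.smul_def]
      exact Submodule.smul_mem _ c hx
    | grade1 v => exact fun x hx => Mspan_mul_gen r n q p hn hx v
    | mul w1 w2 ih1 ih2 =>
      intro x hx
      rw [map_mul, ← mul_assoc]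
      exact ih2 _ (ih1 x hx)
    | add w1 w2 ih1 ih2 =>
      intro x hx
      rw [map_add, mul_add]
      exact add_mem (ih1 x hx) (ih2 x hx)
  simpa using main w 1 (one_mem_Mspan r n q p hn)

theorem eigen_pow {c : ℂ} {x : AYH r n q} (f : AYH r n q ≃ₐ[ℂ] AYH r n q)
    (h : f x = c • x) (k : ℕ) : (f ^ k) x = c ^ k • x := by
  induction k with
  | zero => simp
  | succ k ih =>
    rw [pow_succ, AlgEquiv.mul_apply, h, map_smul, ih, smul_smul, pow_succ, mul_comm]

end Dev7
end AYHpaper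
namespace AYHpaper
section Dev8
variable (r n : ℕ) (q : ℂ) (p : ℕ) (hn : 0 < n) (hp : 0 < p)

theorem zp_ne_zero : ζp p ≠ 0 := Complex.exp_ne_zero _

theorem zp_prim (hp : 0 < p) : IsPrimitiveRoot (ζp p) p :=
  Complex.isPrimitiveRoot_exp p hp.ne'

theorem avg_mem_Y (hp : 0 < p) {x : AYH r n q} (hx : x ∈ Mspan r n q p hn) :
    (p:ℂ)⁻¹ • ∑ k ∈ Finset.range p,
      ((sigmaEquiv r n q (ζp p) (zp_ne_zero p)) ^ k) x ∈ YpSub r n q p := by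
  set σ := sigmaEquiv r n q (ζp p) (zp_ne_zero p) with hσdef
  have hprim := zp_prim p hp
  induction hx using Submodule.span_induction with
  | mem x hx =>
    obtain ⟨m, y, hy, rfl⟩ := hx
    have hσ1 : σ (P1 r n q hn m * y) = (ζp p ^ m) • (P1 r n q hn m * y) := by
      rw [map_mul, sigma_P1, sigma_fix_Yp r n q p _ _ (hprim.pow_eq_one) hy,
        smul_mul_assoc]
    have hsum : ∑ k ∈ Finset.range p, (σ ^ k) (P1 r n q hn m * y)
        = (∑ k ∈ Finset.range p, (ζp p ^ m) ^ k) • (P1 r n q hn m * y) := by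
      rw [Finset.sum_smul]
      exact Finset.sum_congr rfl fun k _ => eigen_pow r n q σ hσ1 k
    rw [hsum, smul_smul]
    by_cases hd : (p:ℤ) ∣ m
    · have h1 : (ζp p : ℂ) ^ m = 1 := (hprim.zpow_eq_one_iff_dvd m).2 hd
      rw [h1]
      simp only [one_pow, Finset.sum_const, Finset.card_range, nsmul_eq_mul, mul_one]
      rw [inv_mul_cancel₀ (by exact_mod_cast hp.ne' : (p:ℂ) ≠ 0), one_smul]
      exact mul_mem (P1_mem r n q p hn m hd) hy
    · have h1 : (ζp p : ℂ) ^ m ≠ 1 := fun h => hd ((hprim.zpow_eq_one_iff_dvd m).1 h)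
      have h2 : ((ζp p : ℂ) ^ m) ^ p = 1 := by
        rw [← zpow_natCast, ← zpow_mul, mul_comm, zpow_mul, zpow_natCast,
          hprim.pow_eq_one, one_zpow]
      rw [geom_sum_eq h1, h2]
      simp only [sub_self, zero_div, mul_zero, zero_smul]
      exact zero_mem _
  | zero =>
      simp only [map_zero, Finset.sum_const, Finset.card_range, smul_zero]
      exact zero_mem _
  | add x y hx hy ihx ihy =>
    have : ∑ k ∈ Finset.range p, (σ ^ k) (x + y)
        = (∑ k ∈ Finset.range p, (σ ^ k) x) + ∑ k ∈ Finset.range p, (σ ^ k) y := by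
      rw [← Finset.sum_add_distrib]
      exact Finset.sum_congr rfl fun k _ => map_add _ _ _
    rw [this, smul_add]
    exact add_mem ihx ihy
  | smul c x hx ihx =>
    have : ∑ k ∈ Finset.range p, (σ ^ k) (c • x)
        = c • ∑ k ∈ Finset.range p, (σ ^ k) x := by
      rw [Finset.smul_sum]
      exact Finset.sum_congr rfl fun k _ => map_smul _ _ _
    rw [this, smul_comm]
    exact Subalgebra.smul_mem _ ihx c

theorem fixed_in_Y (hn : 0 < n) (hp : 0 < p) {a : AYH r n q}
    (ha : sigmaEquiv r n q (ζp p) (zp_ne_zero p) a = a) : a ∈ YpSub r n q p := by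
  set σ := sigmaEquiv r n q (ζp p) (zp_ne_zero p) with hσdef
  have h1 := avg_mem_Y r n q p hn hp (Mspan_top r n q p hn a)
  have hk : ∀ k, (σ ^ k) a = a := by
    intro k
    induction k with
    | zero => rfl
    | succ k ih => rw [pow_succ, AlgEquiv.mul_apply, ha, ih]
  rw [show ∑ k ∈ Finset.range p, (σ ^ k) a = (p:ℕ) • a from by
    rw [Finset.sum_congr rfl fun k _ => hk k, Finset.sum_const, Finset.card_range]] at h1
  rw [← Nat.cast_smul_eq_nsmul ℂ, smul_smul,
    inv_mul_cancel₀ (by exact_mod_cast hp.ne' : (p:ℂ) ≠ 0), one_smul] at h1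
  exact h1

end Dev8
end AYHpaper
namespace AYHpaper
section Dev9
variable (r n : ℕ) (q : ℂ)

theorem fix_pow (f : AYH r n q ≃ₐ[ℂ] AYH r n q) {x : AYH r n q} (h : f x = x) (k : ℕ) :
    (f ^ k) x = x := by
  induction k with
  | zero => rfl
  | succ k ih => rw [pow_succ, AlgEquiv.mul_apply, h, ih]

end Dev9
end AYHpaper

open AYHpaper in
/-- **Theorem 4.7**: the assignment `σ(X_1) = ζ_p X_1`, `σ(g_i) = g_i`,
`σ(t_j) = t_j` extends to an algebra automorphism of `Ŷ_{r,n}(q)` of order `p`, so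
that `ℤ/pℤ = {1, σ, …, σ^{p-1}}` acts on `Ŷ_{r,n}(q)`; the fixed-point subalgebra of
this action is exactly `Ŷ^p_{r,n}(q)`. -/
theorem exists_automorphism_fixed_points_Yp
    (r n p : ℕ) (hr : 0 < r) (hn : 0 < n) (hp : 0 < p)
    (q : ℂ) (hq0 : q ≠ 0) (hq : ∀ m : ℕ, 0 < m → q ^ m ≠ 1) :
    ∃ σ : AYH r n q ≃ₐ[ℂ] AYH r n q,
      σ (X1El r n q) = ζp p • X1El r n q ∧
      (∀ i : Fin (n - 1), σ (gEl r n q i) = gEl r n q i) ∧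
      (∀ j : Fin n, σ (tEl r n q j) = tEl r n q j) ∧
      orderOf σ = p ∧
      ∀ a : AYH r n q, σ a = a ↔ a ∈ YpSub r n q p := by
  have hζ : ζp p ≠ 0 := zp_ne_zero p
  have hprim : IsPrimitiveRoot (ζp p) p := zp_prim p hp
  set σ := sigmaEquiv r n q (ζp p) hζ with hσdef
  refine ⟨σ, sigmaEquiv_X r n q _ hζ, fun i => sigmaEquiv_g r n q _ hζ i,
    fun j => sigmaEquiv_t r n q _ hζ j, ?_,
    fun a => ⟨fun h => fixed_in_Y r n q p hn hp h,
      fun h => sigma_fix_Yp r n q p _ hζ hprim.pow_eq_one h⟩⟩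
  rw [orderOf_eq_iff hp]
  constructor
  · have hcomp : ((σ ^ p).toAlgHom) = ((1 : AYH r n q ≃ₐ[ℂ] AYH r n q).toAlgHom) := by
      apply ayh_hom_ext
      · intro j
        simpa using fix_pow r n q σ (sigmaEquiv_t r n q _ hζ j) p
      · intro i
        simpa using fix_pow r n q σ (sigmaEquiv_g r n q _ hζ i) p
      · have := eigen_pow r n q σ (sigmaEquiv_X r n q _ hζ) p
        rw [hprim.pow_eq_one, one_smul] at this
        simpa using this
      · have := eigen_pow r n q σ (sigmaEquiv_Xinv r n q _ hζ) p
        rw [inv_pow, hprim.pow_eq_one, inv_one, one_smul] at this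
        simpa using this
    apply AlgEquiv.ext
    intro a
    have := DFunLike.congr_fun hcomp a
    simpa using this
  · intro m hmp hm0 hcon
    have hX := eigen_pow r n q σ (sigmaEquiv_X r n q _ hζ) m
    rw [hcon, AlgEquiv.one_apply] at hX
    have hz := sub_smul (ζp p ^ m) 1 (X1El r n q)
    rw [one_smul, ← hX, sub_self] at hz
    rcases smul_eq_zero.mp hz with h | h
    · exact hprim.pow_ne_one_of_pos_of_lt hm0.ne' hmp (sub_eq_zero.mp h)
    · exact X1El_ne_zero r n q hr hq0 h
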